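/- Let α, β > 0 be real numbers and let h : ℝ → ℝ≥0∞ be a measurable function. Let φ_V : ℝ → ℝ be φ_V(z) = √β·(αz/2 + √((αz/2)² + 1)), and let μ be the measure on ℝ with density z ↦ h(z²) with respect to Lebesgue measure. Then the pushforward measure of μ under φ_V equals the measure on ℝ with density, with respect to Lebesgue measure, v ↦ ENNReal.ofReal((1 + β·v⁻²)/(α·√β)) · h((1/α²)·(v²/β + β/v² − 2)) for v > 0 and 0 for v ≤ 0. -/

import Mathlib

open MeasureTheory Set
open scoped ENNReal

private lemma map_withDensity_comp' {φ : ℝ → ℝ} (hφ : Measurable φ) (μ : Measure ℝ)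
    {g : ℝ → ℝ≥0∞} (hg : Measurable g) :
    Measure.map φ (μ.withDensity fun z => g (φ z)) = (Measure.map φ μ).withDensity g := by
  ext t ht
  rw [Measure.map_apply hφ ht, withDensity_apply _ (hφ ht), withDensity_apply _ ht,
    setLIntegral_map ht hg hφ]

/-- If `Z` has density `z ↦ h(z²)` with respect to Lebesgue measure, then
`V = √β (αZ/2 + √((αZ/2)² + 1))` has the square root generalised
Birnbaum–Saunders density
`v ↦ ((1 + β v⁻²)/(α√β)) · h((1/α²)(v²/β + β/v² − 2))` on `v > 0`
(equation (5) of the paper), formulated as an identity of measures. -/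
theorem stmt_18 (α β : ℝ) (hα : 0 < α) (hβ : 0 < β)
    (h : ℝ → ℝ≥0∞) (hh : Measurable h) :
    Measure.map (fun z : ℝ => Real.sqrt β * (α * z / 2 + Real.sqrt ((α * z / 2) ^ 2 + 1)))
        (volume.withDensity fun z : ℝ => h (z ^ 2)) =
      volume.withDensity fun v : ℝ =>
        if 0 < v then
          ENNReal.ofReal ((1 + β * (v ^ 2)⁻¹) / (α * Real.sqrt β)) *
            h ((1 / α ^ 2) * (v ^ 2 / β + β / v ^ 2 - 2))
        else 0 := by
  have hα0 : α ≠ 0 := hα.ne'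
  have hsβ : 0 < Real.sqrt β := Real.sqrt_pos.2 hβ
  have hsβ0 : Real.sqrt β ≠ 0 := hsβ.ne'
  have hsq : Real.sqrt β ^ 2 = β := Real.sq_sqrt hβ.le
  set φ : ℝ → ℝ := fun z => Real.sqrt β * (α * z / 2 + Real.sqrt ((α * z / 2) ^ 2 + 1))
    with hφdef
  set ψ : ℝ → ℝ := fun v => (1 / α) * (v / Real.sqrt β - Real.sqrt β / v) with hψdef
  set d : ℝ → ℝ := fun v => (1 + β * (v ^ 2)⁻¹) / (α * Real.sqrt β) with hddef
  have hφm : Measurable φ := by fun_prop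
  have hψm : Measurable ψ := by fun_prop
  have hdm : Measurable d := by fun_prop
  -- positivity of φ
  have hφpos : ∀ z, 0 < φ z := by
    intro z
    have hs0 : 0 ≤ Real.sqrt ((α * z / 2) ^ 2 + 1) := Real.sqrt_nonneg _
    have hs2 : Real.sqrt ((α * z / 2) ^ 2 + 1) ^ 2 = (α * z / 2) ^ 2 + 1 :=
      Real.sq_sqrt (by positivity)
    have h1 : 0 < α * z / 2 + Real.sqrt ((α * z / 2) ^ 2 + 1) := by nlinarith
    exact mul_pos hsβ h1
  -- ψ ∘ φ = id
  have hψφ : ∀ z, ψ (φ z) = z := by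
    intro z
    set w := α * z / 2 with hwdef
    set s := Real.sqrt (w ^ 2 + 1) with hsdef
    have hs0 : 0 ≤ s := Real.sqrt_nonneg _
    have hs2 : s ^ 2 = w ^ 2 + 1 := Real.sq_sqrt (by positivity)
    have hws : 0 < w + s := by nlinarith
    have hz : z = 2 * w / α := by rw [hwdef]; field_simp
    show (1 / α) * ((Real.sqrt β * (w + s)) / Real.sqrt β
        - Real.sqrt β / (Real.sqrt β * (w + s))) = z
    rw [hz]
    field_simp
    linear_combination hs2
  -- φ ∘ ψ = id on Ioi 0
  have hφψ : ∀ v ∈ Ioi (0:ℝ), φ (ψ v) = v := by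
    intro v hv
    have hv0 : (0:ℝ) < v := hv
    have hvne : v ≠ 0 := hv0.ne'
    have hw : α * ψ v / 2 = (v / Real.sqrt β - Real.sqrt β / v) / 2 := by
      simp only [hψdef]; field_simp
    have h2 : (α * ψ v / 2) ^ 2 + 1 = ((v / Real.sqrt β + Real.sqrt β / v) / 2) ^ 2 := by
      rw [hw]; field_simp
      ring
    have h3 : Real.sqrt ((α * ψ v / 2) ^ 2 + 1) = (v / Real.sqrt β + Real.sqrt β / v) / 2 := by
      rw [h2, Real.sqrt_sq (by positivity)]
    simp only [hφdef]
    rw [h3, hw]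
    field_simp
    ring
  -- the squared identity
  have hsq2 : ∀ v ∈ Ioi (0:ℝ), (ψ v) ^ 2 = (1 / α ^ 2) * (v ^ 2 / β + β / v ^ 2 - 2) := by
    intro v hv
    have hvne : (v:ℝ) ≠ 0 := (lt_of_lt_of_le hv le_rfl).ne'
    simp only [hψdef]
    rw [← hsq]
    field_simp
    rw [Real.sqrt_sq hsβ.le]; ring
  -- derivative of ψ on Ioi 0
  have hderiv : ∀ v ∈ Ioi (0:ℝ),
      HasFDerivWithinAt ψ ((1 : ℝ →L[ℝ] ℝ).smulRight (d v)) (Ioi 0) v := by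
    intro v hv
    have hv0 : (0:ℝ) < v := hv
    have hvne : v ≠ 0 := hv0.ne'
    have h1 : HasDerivAt (fun x : ℝ => x / Real.sqrt β) ((Real.sqrt β)⁻¹) v := by
      simpa [one_div] using (hasDerivAt_id v).div_const (Real.sqrt β)
    have h2 : HasDerivAt (fun x : ℝ => Real.sqrt β / x)
        (Real.sqrt β * (-(v ^ 2)⁻¹)) v := by
      simpa [div_eq_mul_inv] using (hasDerivAt_inv hvne).const_mul (Real.sqrt β)
    have h3 : HasDerivAt ψ ((1 / α) * ((Real.sqrt β)⁻¹ - Real.sqrt β * (-(v ^ 2)⁻¹))) v := by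
      exact ((h1.sub h2).const_mul (1 / α))
    have heq : (1 / α) * ((Real.sqrt β)⁻¹ - Real.sqrt β * (-(v ^ 2)⁻¹)) = d v := by
      simp only [hddef]
      rw [← hsq]
      field_simp
      rw [Real.sqrt_sq hsβ.le]; ring
    rw [heq] at h3
    exact h3.hasFDerivAt.hasFDerivWithinAt
  have hinj : InjOn ψ (Ioi 0) := fun a ha b hb hab => by
    have := congrArg φ hab
    rwa [hφψ a ha, hφψ b hb] at this
  have himg : ψ '' Ioi 0 = univ :=
    eq_univ_of_forall fun z => ⟨φ z, hφpos z, hψφ z⟩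
  -- pushforward of Lebesgue under φ
  have hmap1 := map_withDensity_abs_det_fderiv_eq_addHaar volume measurableSet_Ioi.nullMeasurableSet hderiv hinj
  rw [himg, Measure.restrict_univ] at hmap1
  simp only [ContinuousLinearMap.det_smulRight, ContinuousLinearMap.one_apply, one_mul] at hmap1
  set D : ℝ → ℝ≥0∞ := fun v => ENNReal.ofReal |d v| with hDdef
  have hDm : Measurable D := by fun_prop
  have hmapφvol : Measure.map φ volume
      = (volume.restrict (Ioi 0)).withDensity D := by
    conv_lhs => rw [← hmap1]
    rw [Measure.map_map hφm hψm]
    have hae : φ ∘ ψ =ᵐ[(volume.restrict (Ioi 0)).withDensity D] id := by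
      have h1 : φ ∘ ψ =ᵐ[volume.restrict (Ioi 0)] id :=
        (ae_restrict_iff' measurableSet_Ioi).2 (ae_of_all _ fun v hv => hφψ v hv)
      exact h1.filter_mono (withDensity_absolutelyContinuous _ _).ae_le
    rw [Measure.map_congr hae, Measure.map_id]
  -- the target density composed with φ
  set G : ℝ → ℝ≥0∞ := fun v =>
    if 0 < v then h ((1 / α ^ 2) * (v ^ 2 / β + β / v ^ 2 - 2)) else 0 with hGdef
  have hGm : Measurable G := by
    apply Measurable.ite measurableSet_Ioi _ measurable_const
    fun_prop
  have hcomp : (fun z : ℝ => h (z ^ 2)) = fun z => G (φ z) := by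
    funext z
    have hpos := hφpos z
    simp only [hGdef, if_pos hpos]
    rw [← hsq2 (φ z) hpos, hψφ z]
  rw [hcomp, map_withDensity_comp' hφm volume hGm, hmapφvol,
    ← withDensity_mul _ hDm hGm, ← withDensity_indicator measurableSet_Ioi]
  congr 1
  funext v
  by_cases hv : 0 < v
  · have hd : 0 ≤ d v := by
      have : (0:ℝ) < 1 + β * (v ^ 2)⁻¹ := by positivity
      exact div_nonneg this.le (by positivity)
    simp only [hddef] at hd
    rw [Set.indicator_of_mem (Set.mem_Ioi.2 hv)]
    simp only [Pi.mul_apply, hDdef, hddef, hGdef, if_pos hv, abs_of_nonneg hd]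
  · simp only [indicator_of_notMem (by simpa using hv : v ∉ Ioi (0:ℝ)), if_neg hv]
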